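/- Let (𝒳, μ) be an allocation with assign-envy graph (G, w) = G(𝒳, μ), and let μ* be a minimum-weight perfect matching in (G, w). Let (G*, w*) = G(𝒳, μ*) be the assign-envy graph of the allocation (𝒳, μ*). Then the auxiliary directed graph G*_{μ*} contains no directed cycle. -/

import Mathlib

/-!  Common setup for fair division: agents `N`, items `I`, monotone valuations
`v : N → Finset I → ℝ`, allocations `(𝒳, μ)` given by a bundle family `X : N → Finset I`
and a bijection `σ : Equiv.Perm N` on indices (agent `i` receives bundle `X (σ i)`),
the assign-envy graph, and its auxiliary directed graph. -/

variable {N I : Type*}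

/-- Weight of a walk in a directed graph, given by its list of vertices. -/
def walkWeight {V : Type*} (W : V → V → ℝ) (l : List V) : ℝ :=
  ((l.zip l.tail).map fun p => W p.1 p.2).sum

/-- A (simple) directed cycle, given by the list of its vertices (the closing edge
from the last vertex back to the first is implicit). -/
def IsDiCycle {V : Type*} (adj : V → V → Prop) (l : List V) : Prop :=
  l ≠ [] ∧ l.Nodup ∧ (l ++ l.take 1).Chain' adj

/-- Total weight of a directed cycle (including the closing edge). -/
def cycleWeight {V : Type*} (W : V → V → ℝ) (l : List V) : ℝ :=
  walkWeight W (l ++ l.take 1)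

/-- Adjacency (on indices) of the assign-envy graph `G(𝒳, μ)` of the allocation `(X, σ)`:
agent `i` is joined to its own bundle `X (σ i)` and to every bundle it envies. -/
def aeAdj (v : N → Finset I → ℝ) (X : N → Finset I) (σ : Equiv.Perm N) (i j : N) : Prop :=
  j = σ i ∨ v i (X (σ i)) < v i (X j)

/-- Edge weights of the assign-envy graph: `w(i, X_j) = −v_i(X_j)`. -/
def aeW (v : N → Finset I → ℝ) (X : N → Finset I) (i j : N) : ℝ := - v i (X j)

/-- Auxiliary directed graph of a bipartite graph on `N ⊕ N` (agents on the left, bundle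
indices on the right) with respect to the perfect matching given by a permutation `τ`:
non-matching edges go left-to-right, matching edges are reversed. -/
def aeAux (adj : N → N → Prop) (τ : Equiv.Perm N) : N ⊕ N → N ⊕ N → Prop
  | Sum.inl i, Sum.inr j => adj i j ∧ j ≠ τ i
  | Sum.inr j, Sum.inl i => j = τ i
  | _, _ => False

/-- Auxiliary weights on the auxiliary directed graph: forward edges keep their weight,
reversed matching edges get the negated weight. -/
def aeAuxW (W : N → N → ℝ) : N ⊕ N → N ⊕ N → ℝ
  | Sum.inl i, Sum.inr j => W i j
  | Sum.inr j, Sum.inl i => - W i j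
  | _, _ => 0

/-- EF1 (envy-freeness up to one item) for a family of assigned bundles `Y : N → Finset I`. -/
def EF1 [DecidableEq I] (v : N → Finset I → ℝ) (Y : N → Finset I) : Prop :=
  ∀ i j : N, v i (Y i) ≥ v i (Y j) ∨ ∃ k ∈ Y j, v i (Y i) ≥ v i ((Y j).erase k)

/-- Rotating a directed cycle by one yields a directed cycle. -/
lemma isDiCycle_rotate {V : Type*} {adj : V → V → Prop} {x : V} {l : List V}
    (h : IsDiCycle adj (x :: l)) : IsDiCycle adj (l ++ [x]) := by
  obtain ⟨-, hnd, hch⟩ := h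
  refine ⟨by simp, ?_, ?_⟩
  · rw [List.nodup_append_comm]; exact hnd
  · have hch' : List.Chain' adj (x :: (l ++ [x])) := by simpa using hch
    match l with
    | [] => simpa using hch'
    | y :: l' =>
      unfold List.Chain' at hch' ⊢
      rw [List.isChain_cons] at hch'
      obtain ⟨hxy, hrest⟩ := hch'
      have hxy' : adj x y := hxy y (by rw [List.cons_append]; rfl)
      have h1 : ((y :: l') ++ [x]).take 1 = [y] := rfl
      rw [h1, List.isChain_append]
      refine ⟨hrest, List.isChain_singleton _, ?_⟩
      intro a ha b hb
      simp only [List.head?_cons, Option.mem_def, Option.some.injEq] at hb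
      have h2 : ((y :: l') ++ [x]).getLast? = some x := List.getLast?_concat
      rw [h2] at ha
      simp only [Option.mem_def, Option.some.injEq] at ha
      subst ha; subst hb; exact hxy'

/-- The canonical alternating list of a cycle in the auxiliary graph. -/
def mkCyc (τ : Equiv.Perm N) (a₀ : N) : List N → List (N ⊕ N)
  | [] => []
  | a :: rest => Sum.inl a :: Sum.inr (τ (rest.headD a₀)) :: mkCyc τ a₀ rest

lemma mkCyc_filterMap (τ : Equiv.Perm N) (a₀ : N) (ag : List N) :
    (mkCyc τ a₀ ag).filterMap Sum.getLeft? = ag := by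
  induction ag with
  | nil => rfl
  | cons a rest ih => simp [mkCyc, ih, List.filterMap_cons, Sum.getLeft?_inr]

/-- Parsing an alternating path in the auxiliary graph into its list of agents. -/
lemma parse (adj : N → N → Prop) (τ : Equiv.Perm N) (a₀ : N) :
    ∀ (n : ℕ) (l : List (N ⊕ N)), l.length ≤ n → ∀ a : N,
    ((Sum.inl a :: l) ++ [Sum.inl a₀]).Chain' (aeAux adj τ) →
    ∃ ag : List N, (Sum.inl a :: l : List (N ⊕ N)) = mkCyc τ a₀ (a :: ag) ∧
      ((a :: ag) ++ [a₀]).Chain' (fun i j => adj i (τ j) ∧ τ j ≠ τ i) := by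
  intro n
  induction n with
  | zero =>
    intro l hl a hc
    have : l = [] := List.length_eq_zero_iff.mp (Nat.le_zero.mp hl)
    subst this
    unfold List.Chain' at hc
    rw [List.cons_append, List.nil_append, List.isChain_pair] at hc
    exact absurd hc (by simp [aeAux])
  | succ n ih =>
    intro l hl a hc
    match l with
    | [] =>
      unfold List.Chain' at hc
      rw [List.cons_append, List.nil_append, List.isChain_pair] at hc
      exact absurd hc (by simp [aeAux])
    | x :: l' =>
      unfold List.Chain' at hc
      rw [List.cons_append, List.cons_append, List.isChain_cons_cons] at hc
      obtain ⟨h1, hrest⟩ := hc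
      match x with
      | Sum.inl b => exact absurd h1 (by simp [aeAux])
      | Sum.inr j =>
        obtain ⟨hadj, hne⟩ : adj a j ∧ j ≠ τ a := h1
        match l' with
        | [] =>
          rw [List.nil_append, List.isChain_pair] at hrest
          have hj : j = τ a₀ := hrest
          subst hj
          refine ⟨[], rfl, ?_⟩
          unfold List.Chain'
          rw [List.cons_append, List.nil_append, List.isChain_pair]
          exact ⟨hadj, hne⟩
        | y :: l'' =>
          rw [List.cons_append, List.isChain_cons_cons] at hrest
          obtain ⟨h2, hrest2⟩ := hrest
          match y with
          | Sum.inr j' => exact absurd h2 (by simp [aeAux])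
          | Sum.inl a' =>
            have hj : j = τ a' := h2
            subst hj
            have hlen : l''.length ≤ n := by
              simp only [List.length_cons] at hl; omega
            obtain ⟨ag', heq, hch⟩ := ih l'' hlen a' (by rwa [List.cons_append])
            refine ⟨a' :: ag', ?_, ?_⟩
            · show _ = Sum.inl a :: Sum.inr (τ ((a' :: ag').headD a₀)) :: mkCyc τ a₀ (a' :: ag')
              rw [← heq]; rfl
            · exact List.IsChain.cons_cons ⟨hadj, hne⟩ hch

/-- A cyclic chain of relations yields the relation along `formPerm`. -/
lemma chain'_formPerm {α : Type*} [DecidableEq α] (P : α → α → Prop) (l : List α)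
    (hn : l.Nodup) (hc : (l ++ l.take 1).Chain' P) : ∀ x ∈ l, P x (l.formPerm x) := by
  intro x hx
  obtain ⟨n, hnl, rfl⟩ := List.getElem_of_mem hx
  rw [List.formPerm_apply_getElem _ hn n hnl]
  have hlen1 : 1 ≤ l.length := by omega
  have hL : (l ++ l.take 1).length = l.length + 1 := by
    rw [List.length_append, List.length_take]; omega
  unfold List.Chain' at hc
  rw [List.isChain_iff_getElem] at hc
  have hlt : n < (l ++ l.take 1).length - 1 := by omega
  have key := hc n (by omega)
  have hmod : (n + 1) % l.length < l.length := Nat.mod_lt _ (by omega)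
  have e1 : (l ++ l.take 1).get ⟨n, by omega⟩ = l[n] := by
    rw [List.get_eq_getElem, List.getElem_append_left hnl]
  have e2 : (l ++ l.take 1).get ⟨n + 1, by omega⟩ = l[(n + 1) % l.length]'hmod := by
    rw [List.get_eq_getElem]
    by_cases h : n + 1 < l.length
    · have h3 : (l ++ l.take 1)[n + 1]'(by omega) = l[n + 1] := List.getElem_append_left h
      rw [h3]
      congr 1
      exact (Nat.mod_eq_of_lt h).symm
    · have hn1 : n + 1 = l.length := by omega
      have hm0 : (n + 1) % l.length = 0 := by rw [hn1, Nat.mod_self]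
      have h3 : (l ++ l.take 1)[n + 1]'(by omega) = (l.take 1)[(n + 1) - l.length]'(by
          rw [List.length_take]; omega) :=
        List.getElem_append_right (by omega)
      rw [h3]
      have h4 : (n + 1) - l.length = 0 := by omega
      simp only [h4, List.getElem_take, hm0]
  rw [List.get_eq_getElem] at e1 e2
  rw [e1, e2] at key
  exact key

/-- If `μ*` (here `τ`) is a minimum-weight perfect matching in the
assign-envy graph `G(𝒳, μ)` of an allocation `(X, σ)`, then the auxiliary directed graph
`G*_{μ*}` of the assign-envy graph `G(𝒳, μ*)` with respect to `μ*` has no directed cycle. -/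
theorem min_matching_assign_envy_acyclic
    [Fintype N] [Fintype I] [DecidableEq I]
    (v : N → Finset I → ℝ) (X : N → Finset I) (σ τ : Equiv.Perm N)
    (hmono : ∀ i : N, ∀ A B : Finset I, A ⊆ B → v i A ≤ v i B)
    (hnonneg : ∀ (i : N) (A : Finset I), 0 ≤ v i A)
    (hdisj : ∀ i j : N, i ≠ j → Disjoint (X i) (X j))
    (hτ : ∀ i : N, aeAdj v X σ i (τ i))
    (hτmin : ∀ ρ : Equiv.Perm N, (∀ i : N, aeAdj v X σ i (ρ i)) →
      ∑ i : N, aeW v X i (τ i) ≤ ∑ i : N, aeW v X i (ρ i)) :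
    ∀ C : List (N ⊕ N), ¬ IsDiCycle (aeAux (aeAdj v X τ) τ) C := by
  classical
  -- It suffices to rule out cycles whose first vertex is an agent (left) vertex.
  suffices H : ∀ (a : N) (l : List (N ⊕ N)),
      ¬ IsDiCycle (aeAux (aeAdj v X τ) τ) (Sum.inl a :: l) by
    intro C hC
    match C with
    | [] => exact hC.1 rfl
    | Sum.inl a :: l => exact H a l hC
    | Sum.inr j :: l =>
      have hC' := isDiCycle_rotate hC
      match l with
      | [] =>
        have := hC.2.2
        simp only [List.take, List.Chain', List.isChain_pair] at this
        exact (by simpa [aeAux] using this : False)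
      | y :: l' =>
        have hch := hC.2.2
        unfold List.Chain' at hch
        rw [List.cons_append, List.cons_append, List.isChain_cons_cons] at hch
        obtain ⟨h1, -⟩ := hch
        match y with
        | Sum.inr j' => exact (by simpa [aeAux] using h1 : False)
        | Sum.inl a =>
          rw [List.cons_append] at hC'
          exact H a (l' ++ [Sum.inr j]) hC'
  intro a l hC
  obtain ⟨-, hnd, hch⟩ := hC
  have hch' : ((Sum.inl a :: l) ++ [Sum.inl a]).Chain' (aeAux (aeAdj v X τ) τ) := by
    simpa using hch
  obtain ⟨ag, heq, hchain⟩ := parse (aeAdj v X τ) τ a l.length l le_rfl a hch'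
  set A : List N := a :: ag with hA
  -- A is nodup
  have hAnd : A.Nodup := by
    have : (mkCyc τ a A).Nodup := heq ▸ hnd
    have := this.filterMap (f := Sum.getLeft?)
      (by rintro ⟨x⟩ ⟨y⟩ b hb hb' <;> simp_all)
    rwa [mkCyc_filterMap] at this
  -- cyclic chain on A
  have hchainA : (A ++ A.take 1).Chain' (fun i j => aeAdj v X τ i (τ j) ∧ τ j ≠ τ i) := by
    simpa [hA] using hchain
  set c : Equiv.Perm N := A.formPerm with hc
  have hE : ∀ x ∈ A, v x (X (τ x)) < v x (X (τ (c x))) := by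
    intro x hx
    obtain ⟨hadj, hne⟩ := chain'_formPerm _ A hAnd hchainA x hx
    rcases hadj with h | h
    · exact absurd h hne
    · exact h
  set ρ : Equiv.Perm N := τ * c with hρdef
  have hle : ∀ i : N, v i (X (τ i)) ≤ v i (X (ρ i)) := by
    intro i
    by_cases hi : i ∈ A
    · exact le_of_lt (hE i hi)
    · have : c i = i := List.formPerm_apply_of_notMem hi
      simp [hρdef, Equiv.Perm.mul_apply, this]
  have hρ : ∀ i : N, aeAdj v X σ i (ρ i) := by
    intro i
    by_cases hi : i ∈ A
    · right
      have h1 : v i (X (σ i)) ≤ v i (X (τ i)) := by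
        rcases hτ i with h | h
        · rw [h]
        · exact le_of_lt h
      exact lt_of_le_of_lt h1 (hE i hi)
    · have : c i = i := List.formPerm_apply_of_notMem hi
      have : ρ i = τ i := by simp [hρdef, Equiv.Perm.mul_apply, this]
      rw [this]; exact hτ i
  have hmin := hτmin ρ hρ
  have hsum : ∑ i : N, v i (X (ρ i)) ≤ ∑ i : N, v i (X (τ i)) := by
    have : ∑ i : N, -v i (X (τ i)) ≤ ∑ i : N, -v i (X (ρ i)) := hmin
    rw [Finset.sum_neg_distrib, Finset.sum_neg_distrib] at this
    linarith
  have hstrict : ∑ i : N, v i (X (τ i)) < ∑ i : N, v i (X (ρ i)) := by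
    apply Finset.sum_lt_sum
    · intro i _; exact hle i
    · exact ⟨a, Finset.mem_univ a, hE a (by simp [hA])⟩
  linarith
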